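/- Let (X,d) be a locally compact metric space, p,q ∈ X, and suppose the d_0-ball B_{d_0}(p;r) is d-precompact and r ≤ d_0(p,q) < ∞. Then for all sufficiently small δ > 0 there exist points p_0 = p, p_1, ..., p_N ∈ X with N = ⌊r/δ⌋ such that d_0(p,q) = d_0(p_0,p_1) + ... + d_0(p_{N-1},p_N) + d_0(p_N,q) and d_0(p_{k-1},p_k) = δ for all k ∈ {1,...,N}. -/

import Mathlib

open Filter Set
open scoped ENNReal

variable {X : Type*}

/-- The length of the chain `x 0, x 1, …, x n` with respect to the distance `ρ`. -/
noncomputable def chainLengthOf (ρ : X → X → ℝ≥0∞) (x : ℕ → X) (n : ℕ) : ℝ≥0∞ :=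
  ∑ k ∈ Finset.range n, ρ (x k) (x (k + 1))

/-- `x 0, …, x n` is an `ε`-chain from `p` to `q` with respect to `ρ`. -/
def IsChainOf (ρ : X → X → ℝ≥0∞) (ε : ℝ≥0∞) (p q : X) (x : ℕ → X) (n : ℕ) : Prop :=
  x 0 = p ∧ x n = q ∧ ∀ k < n, ρ (x k) (x (k + 1)) ≤ ε

/-- `d_ε`: the infimum of lengths of `ε`-chains joining `p` to `q`. -/
noncomputable def chainDistOf (ρ : X → X → ℝ≥0∞) (ε : ℝ≥0∞) (p q : X) : ℝ≥0∞ :=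
  ⨅ (n : ℕ) (x : ℕ → X) (_ : IsChainOf ρ ε p q x n), chainLengthOf ρ x n

/-- `d_0 = sup_{ε > 0} d_ε`. -/
noncomputable def chainMetricOf (ρ : X → X → ℝ≥0∞) (p q : X) : ℝ≥0∞ :=
  ⨆ (ε : ℝ≥0∞) (_ : 0 < ε), chainDistOf ρ ε p q

/-- `d_ε` for a metric space, with `ρ = edist`. -/
noncomputable def chainDist [PseudoEMetricSpace X] (ε : ℝ≥0∞) (p q : X) : ℝ≥0∞ :=
  chainDistOf (fun a b => edist a b) ε p q

/-- `d_0` for a metric space, with `ρ = edist`. -/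
noncomputable def chainMetric [PseudoEMetricSpace X] (p q : X) : ℝ≥0∞ :=
  chainMetricOf (fun a b => edist a b) p q

/-- The length of a path `γ : [0,1] → X` with respect to `ρ`:
the supremum over partitions `0 = t 0 ≤ t 1 ≤ … ≤ t n = 1` of the partition sums. -/
noncomputable def pathLengthOf (ρ : X → X → ℝ≥0∞) (γ : ℝ → X) : ℝ≥0∞ :=
  ⨆ (n : ℕ) (t : ℕ → ℝ) (_ : t 0 = 0 ∧ t n = 1 ∧ Monotone t),
    ∑ k ∈ Finset.range n, ρ (γ (t k)) (γ (t (k + 1)))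

noncomputable def pathLength [PseudoEMetricSpace X] (γ : ℝ → X) : ℝ≥0∞ :=
  pathLengthOf (fun a b => edist a b) γ

/-- Continuity of a path `γ` on `[0,1]` with respect to the distance `ρ`. -/
def ContinuousWrt (ρ : X → X → ℝ≥0∞) (γ : ℝ → X) : Prop :=
  ∀ t ∈ Icc (0 : ℝ) 1,
    Tendsto (fun s => ρ (γ s) (γ t)) (nhdsWithin t (Icc (0 : ℝ) 1)) (nhds 0)

/-- The induced length metric with respect to `ρ`: the infimum of `ρ`-lengths of
`ρ`-continuous paths joining `p` to `q`. -/
noncomputable def lengthMetricOf (ρ : X → X → ℝ≥0∞) (p q : X) : ℝ≥0∞ :=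
  ⨅ (γ : ℝ → X) (_ : ContinuousWrt ρ γ ∧ γ 0 = p ∧ γ 1 = q), pathLengthOf ρ γ

/-- The induced length metric `d̄` of a metric space. -/
noncomputable def lengthMetric [PseudoEMetricSpace X] (p q : X) : ℝ≥0∞ :=
  lengthMetricOf (fun a b => edist a b) p q

section Basic
variable [PseudoEMetricSpace X]

lemma chainDist_le_length {ε : ℝ≥0∞} {p q : X} {x : ℕ → X} {n : ℕ}
    (h : IsChainOf (fun a b => edist a b) ε p q x n) :
    chainDist ε p q ≤ chainLengthOf (fun a b => edist a b) x n := by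
  refine iInf_le_of_le n (iInf_le_of_le x (iInf_le_of_le h le_rfl))

lemma edist_le_chainLength (x : ℕ → X) (n : ℕ) :
    edist (x 0) (x n) ≤ chainLengthOf (fun a b => edist a b) x n := by
  induction n with
  | zero => simp [chainLengthOf]
  | succ n ih =>
    calc edist (x 0) (x (n+1)) ≤ edist (x 0) (x n) + edist (x n) (x (n+1)) :=
          edist_triangle _ _ _
    _ ≤ _ := by
        rw [chainLengthOf, Finset.sum_range_succ]
        exact add_le_add ih le_rfl

lemma chainDist_mono {ε₁ ε₂ : ℝ≥0∞} (h : ε₁ ≤ ε₂) (p q : X) :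
    chainDist ε₂ p q ≤ chainDist ε₁ p q := by
  refine le_iInf fun n => le_iInf fun x => le_iInf fun hx => ?_
  exact chainDist_le_length ⟨hx.1, hx.2.1, fun k hk => (hx.2.2 k hk).trans h⟩

lemma chainDist_le_chainMetric {ε : ℝ≥0∞} (hε : 0 < ε) (p q : X) :
    chainDist ε p q ≤ chainMetric p q :=
  le_iSup₂ (f := fun ε (_ : 0 < ε) => chainDist ε p q) ε hε

lemma chainMetric_le {c : ℝ≥0∞} {p q : X}
    (h : ∀ ε : ℝ≥0∞, 0 < ε → chainDist ε p q ≤ c) : chainMetric p q ≤ c :=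
  iSup₂_le h

lemma chainDist_self (ε : ℝ≥0∞) (p : X) : chainDist ε p p = 0 := by
  refine le_antisymm ?_ zero_le
  have : IsChainOf (fun a b => edist a b) ε p p (fun _ => p) 0 :=
    ⟨rfl, rfl, fun k hk => by omega⟩
  simpa [chainLengthOf] using chainDist_le_length this

lemma chainMetric_self (p : X) : chainMetric p p = 0 := by
  refine le_antisymm (chainMetric_le fun ε hε => le_of_eq (chainDist_self ε p)) zero_le

lemma chainDist_le_edist {ε : ℝ≥0∞} {p q : X} (h : edist p q ≤ ε) :
    chainDist ε p q ≤ edist p q := by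
  have hc : IsChainOf (fun a b => edist a b) ε p q (fun i => if i = 0 then p else q) 1 := by
    refine ⟨rfl, rfl, fun k hk => ?_⟩
    interval_cases k
    simpa using h
  simpa [chainLengthOf] using chainDist_le_length hc

omit [PseudoEMetricSpace X] in
/-- Concatenation of chains -/
lemma IsChainOf.concat {ρ : X → X → ℝ≥0∞} {ε : ℝ≥0∞} {a b c : X} {x y : ℕ → X} {n m : ℕ}
    (hx : IsChainOf ρ ε a b x n) (hy : IsChainOf ρ ε b c y m) :
    IsChainOf ρ ε a c (fun i => if i < n then x i else y (i - n)) (n + m) ∧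
      chainLengthOf ρ (fun i => if i < n then x i else y (i - n)) (n + m)
        = chainLengthOf ρ x n + chainLengthOf ρ y m := by
  obtain ⟨hx0, hxn, hxs⟩ := hx
  obtain ⟨hy0, hym, hys⟩ := hy
  set z : ℕ → X := fun i => if i < n then x i else y (i - n) with hz
  have hzx : ∀ i < n, z i = x i := fun i hi => by simp [hz, hi]
  have hzy : ∀ i, n ≤ i → z i = y (i - n) := fun i hi => by simp [hz, Nat.not_lt.2 hi]
  have hstep : ∀ k, ρ (z k) (z (k + 1)) =
      if k < n then ρ (x k) (x (k + 1)) else ρ (y (k - n)) (y (k - n + 1)) := by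
    intro k
    by_cases hk : k < n
    · rw [hzx k hk, if_pos hk]
      rcases Nat.lt_or_ge (k+1) n with h1 | h1
      · rw [hzx _ h1]
      · have : k + 1 = n := le_antisymm hk h1
        rw [hzy _ h1, this]
        simp [hxn, ← hy0]
    · rw [if_neg hk, hzy k (Nat.not_lt.1 hk), hzy (k+1) (by omega)]
      congr 2
      omega
  constructor
  · refine ⟨?_, ?_, ?_⟩
    · rcases Nat.eq_zero_or_pos n with h | h
      · subst h; simp [hz, hy0, ← hx0, ← hxn]
      · simpa [hz, h] using hx0
    · have : ¬ (n + m < n) := by omega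
      simp [hz, this, hym]
    · intro k hk
      rw [hstep k]
      by_cases h : k < n
      · simpa [h] using hxs k h
      · simp only [if_neg h]
        exact hys _ (by omega)
  · simp only [chainLengthOf]
    rw [Finset.sum_range_add]
    congr 1
    · exact Finset.sum_congr rfl fun k hk => by
        rw [hstep k, if_pos (Finset.mem_range.1 hk)]
    · exact Finset.sum_congr rfl fun k hk => by
        rw [hstep (n + k), if_neg (by omega)]
        congr 2 <;> omega

lemma chainDist_triangle (ε : ℝ≥0∞) (a b c : X) :
    chainDist ε a c ≤ chainDist ε a b + chainDist ε b c := by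
  have key : ∀ (n : ℕ) (x : ℕ → X), IsChainOf (fun a b => edist a b) ε a b x n →
      ∀ (m : ℕ) (y : ℕ → X), IsChainOf (fun a b => edist a b) ε b c y m →
      chainDist ε a c ≤ chainLengthOf (fun a b => edist a b) x n
        + chainLengthOf (fun a b => edist a b) y m := by
    intro n x hx m y hy
    obtain ⟨hc, hl⟩ := hx.concat hy
    exact (chainDist_le_length hc).trans (le_of_eq hl)
  have heq : chainDist ε a b + chainDist ε b c =
      ⨅ (m : ℕ) (y : ℕ → X) (hy : IsChainOf (fun a b => edist a b) ε b c y m)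
        (n : ℕ) (x : ℕ → X) (hx : IsChainOf (fun a b => edist a b) ε a b x n),
        chainLengthOf (fun a b => edist a b) x n + chainLengthOf (fun a b => edist a b) y m := by
    rw [chainDist, chainDist, chainDistOf, chainDistOf]
    simp only [ENNReal.iInf_add, ENNReal.add_iInf]
  rw [heq]
  exact le_iInf fun m => le_iInf fun y => le_iInf fun hy => le_iInf fun n =>
    le_iInf fun x => le_iInf fun hx => key n x hx m y hy

lemma chainMetric_triangle (a b c : X) :
    chainMetric a c ≤ chainMetric a b + chainMetric b c :=
  chainMetric_le fun ε hε => (chainDist_triangle ε a b c).trans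
    (add_le_add (chainDist_le_chainMetric hε _ _) (chainDist_le_chainMetric hε _ _))

end Basic

section Step
variable [PseudoEMetricSpace X]

lemma chainMetric_eq_subtype (p q : X) :
    chainMetric p q = ⨆ (s : {ε : ℝ≥0∞ // 0 < ε}), chainDist s.1 p q := by
  rw [chainMetric, chainMetricOf, iSup_subtype']
  rfl

/-- Existence of a small `ε` nearly attaining the sup. -/
lemma exists_eps (a q : X) {θ : ℝ} (hθ : 0 < θ) (hfin : chainMetric a q ≠ ⊤)
    (hpos : 0 < chainMetric a q) :
    ∃ ε : ℝ≥0∞, 0 < ε ∧ ε ≤ ENNReal.ofReal θ ∧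
      chainMetric a q ≤ chainDist ε a q + ENNReal.ofReal θ := by
  have h1 : chainMetric a q - ENNReal.ofReal θ < chainMetric a q :=
    ENNReal.sub_lt_self hfin (ne_of_gt hpos) (by simp [hθ])
  rw [chainMetric_eq_subtype] at h1
  rw [lt_iSup_iff] at h1
  obtain ⟨⟨ε, hε⟩, hlt⟩ := h1
  rw [← chainMetric_eq_subtype] at hlt
  refine ⟨min ε (ENNReal.ofReal θ), lt_min hε (by simp [hθ]), min_le_right _ _, ?_⟩
  have h2 : chainDist ε a q ≤ chainDist (min ε (ENNReal.ofReal θ)) a q :=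
    chainDist_mono (min_le_left _ _) a q
  have h3 : chainMetric a q - ENNReal.ofReal θ ≤ chainDist (min ε (ENNReal.ofReal θ)) a q :=
    le_trans hlt.le h2
  rwa [tsub_le_iff_right] at h3

/-- Existence of a nearly optimal chain. -/
lemma exists_chain (a q : X) {ε η : ℝ≥0∞} (hη : 0 < η)
    (hfin : chainDist ε a q ≠ ⊤) :
    ∃ (m : ℕ) (x : ℕ → X), IsChainOf (fun a b => edist a b) ε a q x m ∧
      chainLengthOf (fun a b => edist a b) x m < chainDist ε a q + η := by
  have h : chainDist ε a q < chainDist ε a q + η :=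
    ENNReal.lt_add_right hfin (ne_of_gt hη)
  conv_lhs at h => rw [chainDist, chainDistOf]
  simp only [iInf_lt_iff] at h
  obtain ⟨m, x, hx, hlt⟩ := h
  exact ⟨m, x, hx, hlt⟩

end Step

section Step2
variable [PseudoEMetricSpace X]

omit [PseudoEMetricSpace X] in
lemma chainLength_split (ρ : X → X → ℝ≥0∞) (x : ℕ → X) {j m : ℕ} (hjm : j ≤ m) :
    chainLengthOf ρ x m = chainLengthOf ρ x j + chainLengthOf ρ (fun i => x (j + i)) (m - j) := by
  unfold chainLengthOf
  conv_lhs => rw [show m = j + (m - j) by omega]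
  rw [Finset.sum_range_add]
  rfl

/-- The key approximation: a point `b` at chain-distance roughly `δ` from `a`
lying on a nearly optimal `ε`-chain from `a` to `q`. -/
lemma exists_approx_point (a q : X) {δ θ : ℝ} (hδ : 0 < δ) (hθpos : 0 < θ)
    (hθδ : θ < δ) (hfin : chainMetric a q ≠ ⊤) (hδT : ENNReal.ofReal δ ≤ chainMetric a q) :
    ∃ (b : X) (ε : ℝ≥0∞), 0 < ε ∧ ε ≤ ENNReal.ofReal θ ∧
      edist a b ≤ ENNReal.ofReal δ + ε ∧
      chainDist ε a b ≤ ENNReal.ofReal δ + ε ∧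
      chainDist ε b q + ENNReal.ofReal δ ≤
        chainMetric a q + ENNReal.ofReal θ + ENNReal.ofReal θ ∧
      chainDist ε a b + chainDist ε b q ≤ chainMetric a q + ENNReal.ofReal θ := by
  classical
  set T := chainMetric a q with hT
  have hTpos : 0 < T := lt_of_lt_of_le (by simp [hδ]) hδT
  obtain ⟨ε, hεpos, hεθ, hTle⟩ := exists_eps a q hθpos hfin hTpos
  have hdfin : chainDist ε a q ≠ ⊤ :=
    ne_top_of_le_ne_top hfin (chainDist_le_chainMetric hεpos a q)
  obtain ⟨m, x, hchain, hL⟩ := exists_chain a q (by simp [hθpos] : (0:ℝ≥0∞) < ENNReal.ofReal θ) hdfin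
  set E : X → X → ℝ≥0∞ := fun a b => edist a b with hE
  set L := chainLengthOf E x m with hLdef
  have hLub : L < T + ENNReal.ofReal θ :=
    lt_of_lt_of_le hL (add_le_add_left (chainDist_le_chainMetric hεpos a q) _)
  have hLlb : T ≤ L + ENNReal.ofReal θ :=
    hTle.trans (add_le_add_left (chainDist_le_length hchain) _)
  -- partial sums
  set S : ℕ → ℝ≥0∞ := fun j => chainLengthOf E x j with hS
  have hSmono : Monotone S := fun i j hij =>
    Finset.sum_le_sum_of_subset (Finset.range_subset_range.2 hij)
  -- first index where the partial sum reaches δ (or the end of the chain)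
  have hex : ∃ j, ENNReal.ofReal δ ≤ S j ∨ m ≤ j := ⟨m, Or.inr le_rfl⟩
  set j := Nat.find hex with hj
  have hjP : ENNReal.ofReal δ ≤ S j ∨ m ≤ j := Nat.find_spec hex
  have hjm : j ≤ m := Nat.find_min' hex (Or.inr le_rfl)
  have hjmin : ∀ i, i < j → ¬ (ENNReal.ofReal δ ≤ S i ∨ m ≤ i) := fun i hi => Nat.find_min hex hi
  have hj0 : j ≠ 0 := by
    intro h0
    rcases hjP with hP | hP
    · rw [h0] at hP
      simp only [hS, chainLengthOf, Finset.range_zero, Finset.sum_empty] at hP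
      exact absurd hP (by simp [hδ])
    · have hm0 : m = 0 := by omega
      -- then the chain has length 0, contradicting `δ ≤ T ≤ L + θ` and `θ < δ`
      have : L = 0 := by simp [hLdef, hm0, chainLengthOf]
      have h1 : ENNReal.ofReal δ ≤ ENNReal.ofReal θ := by
        calc ENNReal.ofReal δ ≤ T := hδT
        _ ≤ L + ENNReal.ofReal θ := hLlb
        _ = ENNReal.ofReal θ := by rw [this, zero_add]
      have := (ENNReal.ofReal_le_ofReal_iff hθpos.le).1 h1
      linarith
  clear_value j
  obtain ⟨j', rfl⟩ : ∃ j', j = j' + 1 := ⟨j - 1, by omega⟩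
  have hprev : ¬ (ENNReal.ofReal δ ≤ S j' ∨ m ≤ j') := hjmin j' (by omega)
  push_neg at hprev
  obtain ⟨hSj', hj'm⟩ := hprev
  have hstepj : edist (x j') (x (j' + 1)) ≤ ε := hchain.2.2 j' hj'm
  have hSsucc : S (j' + 1) = S j' + edist (x j') (x (j' + 1)) := by
    simp [hS, chainLengthOf, Finset.sum_range_succ, hE]
  have hSub : S (j' + 1) ≤ ENNReal.ofReal δ + ε := by
    rw [hSsucc]
    exact add_le_add hSj'.le hstepj
  have hSlb : ENNReal.ofReal δ ≤ S (j' + 1) + ENNReal.ofReal θ := by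
    rcases hjP with hP | hP
    · exact le_add_right hP
    · have : j' + 1 = m := by omega
      rw [this]
      exact hδT.trans hLlb
  -- the point b
  refine ⟨x (j' + 1), ε, hεpos, hεθ, ?_, ?_, ?_, ?_⟩
  · -- edist a b
    calc edist a (x (j' + 1)) = edist (x 0) (x (j' + 1)) := by rw [hchain.1]
    _ ≤ S (j' + 1) := edist_le_chainLength x (j' + 1)
    _ ≤ _ := hSub
  · -- prefix chain
    have hpre : IsChainOf E ε a (x (j' + 1)) x (j' + 1) :=
      ⟨hchain.1, rfl, fun k hk => hchain.2.2 k (lt_of_lt_of_le hk (by omega))⟩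
    exact (chainDist_le_length hpre).trans hSub
  · -- suffix chain and δ-lower bound
    have hsuf : IsChainOf E ε (x (j' + 1)) q (fun i => x (j' + 1 + i)) (m - (j' + 1)) := by
      refine ⟨by simp, ?_, fun k hk => ?_⟩
      · show x (j' + 1 + (m - (j' + 1))) = q
        rw [show j' + 1 + (m - (j' + 1)) = m by omega, hchain.2.1]
      · exact hchain.2.2 (j' + 1 + k) (by omega)
    have hsplit : S (j' + 1) + chainLengthOf E (fun i => x (j' + 1 + i)) (m - (j' + 1)) = L := by
      rw [hS, hLdef]
      exact (chainLength_split E x hjm).symm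
    have hsufle : chainDist ε (x (j' + 1)) q ≤
        chainLengthOf E (fun i => x (j' + 1 + i)) (m - (j' + 1)) := chainDist_le_length hsuf
    calc chainDist ε (x (j' + 1)) q + ENNReal.ofReal δ
        ≤ chainLengthOf E (fun i => x (j' + 1 + i)) (m - (j' + 1))
            + (S (j' + 1) + ENNReal.ofReal θ) := add_le_add hsufle hSlb
    _ = L + ENNReal.ofReal θ := by rw [← add_assoc, add_comm (chainLengthOf _ _ _), hsplit]
    _ ≤ T + ENNReal.ofReal θ + ENNReal.ofReal θ := by
        exact add_le_add_left hLub.le _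
  · -- near-optimality of the split
    have hpre : IsChainOf E ε a (x (j' + 1)) x (j' + 1) :=
      ⟨hchain.1, rfl, fun k hk => hchain.2.2 k (lt_of_lt_of_le hk (by omega))⟩
    have hsuf : IsChainOf E ε (x (j' + 1)) q (fun i => x (j' + 1 + i)) (m - (j' + 1)) := by
      refine ⟨by simp, ?_, fun k hk => ?_⟩
      · show x (j' + 1 + (m - (j' + 1))) = q
        rw [show j' + 1 + (m - (j' + 1)) = m by omega, hchain.2.1]
      · exact hchain.2.2 (j' + 1 + k) (by omega)
    have hsplit : S (j' + 1) + chainLengthOf E (fun i => x (j' + 1 + i)) (m - (j' + 1)) = L := by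
      rw [hS, hLdef]
      exact (chainLength_split E x hjm).symm
    calc chainDist ε a (x (j' + 1)) + chainDist ε (x (j' + 1)) q
        ≤ S (j' + 1) + chainLengthOf E (fun i => x (j' + 1 + i)) (m - (j' + 1)) :=
          add_le_add (chainDist_le_length hpre) (chainDist_le_length hsuf)
    _ = L := hsplit
    _ ≤ T + ENNReal.ofReal θ := hLub.le

end Step2

section Step3
variable [MetricSpace X]

lemma step_lemma {C : Set X} (hC : IsCompact C) (a q : X) {δ c : ℝ}
    (hδ : 0 < δ) (hc : 0 < c)
    (hball : ∀ y : X, dist a y ≤ δ + c → y ∈ C)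
    (hfin : chainMetric a q ≠ ⊤) (hδT : ENNReal.ofReal δ ≤ chainMetric a q) :
    ∃ b : X, chainMetric a b = ENNReal.ofReal δ ∧
      chainMetric a q = ENNReal.ofReal δ + chainMetric b q := by
  classical
  set T := chainMetric a q with hT
  -- the sequence of approximation scales
  set θ : ℕ → ℝ := fun n => min c (min (δ / 2) (1 / (n + 1))) with hθ
  have hθpos : ∀ n, 0 < θ n := fun n => lt_min hc (lt_min (by linarith) (by positivity))
  have hθc : ∀ n, θ n ≤ c := fun n => min_le_left _ _
  have hθδ : ∀ n, θ n < δ := fun n =>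
    lt_of_le_of_lt ((min_le_right _ _).trans (min_le_left _ _)) (by linarith)
  have hθn : ∀ n, θ n ≤ 1 / (n + 1) := fun n => (min_le_right _ _).trans (min_le_right _ _)
  -- the approximating points
  have main : ∀ n : ℕ, ∃ (b : X) (ε : ℝ≥0∞), 0 < ε ∧ ε ≤ ENNReal.ofReal (θ n) ∧
      edist a b ≤ ENNReal.ofReal δ + ε ∧
      chainDist ε a b ≤ ENNReal.ofReal δ + ε ∧
      chainDist ε b q + ENNReal.ofReal δ ≤ T + ENNReal.ofReal (θ n) + ENNReal.ofReal (θ n) ∧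
      chainDist ε a b + chainDist ε b q ≤ T + ENNReal.ofReal (θ n) :=
    fun n => exists_approx_point a q hδ (hθpos n) (hθδ n) hfin hδT
  choose b ε hεpos hεθ hedist hdab hdbq hsplit using main
  -- the points lie in the compact set C
  have hmem : ∀ n, b n ∈ C := by
    intro n
    apply hball
    have h1 : edist a (b n) ≤ ENNReal.ofReal (δ + c) := by
      calc edist a (b n) ≤ ENNReal.ofReal δ + ε n := hedist n
      _ ≤ ENNReal.ofReal δ + ENNReal.ofReal c := add_le_add_right ((hεθ n).trans
            (ENNReal.ofReal_le_ofReal (hθc n))) _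
      _ = ENNReal.ofReal (δ + c) := (ENNReal.ofReal_add hδ.le hc.le).symm
    rw [edist_dist] at h1
    exact (ENNReal.ofReal_le_ofReal_iff (by linarith)).1 h1
  obtain ⟨bb, hbbC, φ, hφ, hconv⟩ := hC.tendsto_subseq hmem
  -- quantitative convergence
  have hconv' : Tendsto (fun i => edist (b (φ i)) bb) atTop (nhds 0) := by
    simpa using hconv.edist (tendsto_const_nhds (x := bb))
  have hθconv : Tendsto (fun i => ENNReal.ofReal (θ (φ i))) atTop (nhds 0) := by
    have h1 : Tendsto (fun i : ℕ => θ (φ i)) atTop (nhds 0) := by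
      refine squeeze_zero (fun i => (hθpos _).le) (fun i => ?_)
        tendsto_one_div_add_atTop_nhds_zero_nat
      refine (hθn (φ i)).trans ?_
      have hle : (i : ℝ) ≤ (φ i : ℝ) := by exact_mod_cast hφ.le_apply
      apply one_div_le_one_div_of_le (by positivity)
      linarith
    simpa using ENNReal.tendsto_ofReal h1
  -- combined selection of good indices
  have haux : ∀ (ε' : ℝ≥0∞), 0 < ε' → ∀ ζ : ℝ, 0 < ζ → ∃ i,
      ε (φ i) ≤ ε' ∧ edist (b (φ i)) bb ≤ ε' ∧
      edist (b (φ i)) bb ≤ ENNReal.ofReal ζ ∧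
      ENNReal.ofReal (θ (φ i)) ≤ ENNReal.ofReal ζ := by
    intro ε' hε' ζ hζ
    have h1 : ∀ᶠ i in atTop, ENNReal.ofReal (θ (φ i)) < min ε' (ENNReal.ofReal ζ) := by
      refine hθconv.eventually_lt_const ?_
      exact lt_min hε' (by simp [hζ])
    have h2 : ∀ᶠ i in atTop, edist (b (φ i)) bb < min ε' (ENNReal.ofReal ζ) := by
      refine hconv'.eventually_lt_const ?_
      exact lt_min hε' (by simp [hζ])
    obtain ⟨i, hi1, hi2⟩ := (h1.and h2).exists
    refine ⟨i, ?_, ?_, ?_, ?_⟩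
    · exact (hεθ _).trans (hi1.le.trans (min_le_left _ _))
    · exact hi2.le.trans (min_le_left _ _)
    · exact hi2.le.trans (min_le_right _ _)
    · exact hi1.le.trans (min_le_right _ _)
  -- Claim A : chainMetric a bb ≤ ofReal δ
  have claimA : chainMetric a bb ≤ ENNReal.ofReal δ := by
    refine chainMetric_le fun ε' hε' => ?_
    refine ENNReal.le_of_forall_pos_le_add fun ζ hζ _ => ?_
    obtain ⟨i, h1, h2, h3, h4⟩ := haux ε' hε' ((ζ : ℝ) / 2) (by positivity)
    calc chainDist ε' a bb ≤ chainDist ε' a (b (φ i)) + chainDist ε' (b (φ i)) bb :=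
          chainDist_triangle _ _ _ _
    _ ≤ chainDist (ε (φ i)) a (b (φ i)) + edist (b (φ i)) bb :=
          add_le_add (chainDist_mono h1 _ _) (chainDist_le_edist h2)
    _ ≤ (ENNReal.ofReal δ + ε (φ i)) + ENNReal.ofReal ((ζ : ℝ) / 2) :=
          add_le_add (hdab _) h3
    _ ≤ (ENNReal.ofReal δ + ENNReal.ofReal ((ζ : ℝ) / 2)) + ENNReal.ofReal ((ζ : ℝ) / 2) :=
          add_le_add_left (add_le_add_right ((hεθ _).trans h4) _) _
    _ = ENNReal.ofReal δ + (ENNReal.ofReal ((ζ : ℝ) / 2) + ENNReal.ofReal ((ζ : ℝ) / 2)) := by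
          ring
    _ = ENNReal.ofReal δ + (ζ : ℝ≥0∞) := by
          rw [← ENNReal.ofReal_add (by positivity) (by positivity)]
          norm_num [ENNReal.ofReal_coe_nnreal]
  -- pieces of the quarter argument
  have hquarter : ∀ ζ : NNReal, 0 < ζ →
      ENNReal.ofReal ((ζ : ℝ) / 4) + ENNReal.ofReal ((ζ : ℝ) / 4) + ENNReal.ofReal ((ζ : ℝ) / 4)
        ≤ (ζ : ℝ≥0∞) := by
    intro ζ hζ
    have h0 : (0:ℝ) < (ζ : ℝ) := hζ
    rw [← ENNReal.ofReal_add (by positivity) (by positivity),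
      ← ENNReal.ofReal_add (by positivity) (by positivity), ← ENNReal.ofReal_coe_nnreal]
    apply ENNReal.ofReal_le_ofReal
    linarith
  -- Claim B' : chainMetric bb q + ofReal δ ≤ T
  have perE : ∀ ε' : ℝ≥0∞, 0 < ε' → chainDist ε' bb q + ENNReal.ofReal δ ≤ T := by
    intro ε' hε'
    refine ENNReal.le_of_forall_pos_le_add fun ζ hζ _ => ?_
    obtain ⟨i, h1, h2, h3, h4⟩ := haux ε' hε' ((ζ : ℝ) / 4) (by positivity)
    have key : chainDist ε' bb q ≤ edist (b (φ i)) bb + chainDist (ε (φ i)) (b (φ i)) q := by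
      calc chainDist ε' bb q ≤ chainDist ε' bb (b (φ i)) + chainDist ε' (b (φ i)) q :=
            chainDist_triangle _ _ _ _
      _ ≤ edist bb (b (φ i)) + chainDist (ε (φ i)) (b (φ i)) q :=
            add_le_add (chainDist_le_edist (by rwa [edist_comm])) (chainDist_mono h1 _ _)
      _ = edist (b (φ i)) bb + chainDist (ε (φ i)) (b (φ i)) q := by rw [edist_comm]
    calc chainDist ε' bb q + ENNReal.ofReal δ
        ≤ (edist (b (φ i)) bb + chainDist (ε (φ i)) (b (φ i)) q) + ENNReal.ofReal δ :=
          add_le_add_left key _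
    _ = edist (b (φ i)) bb + (chainDist (ε (φ i)) (b (φ i)) q + ENNReal.ofReal δ) := by
          rw [add_assoc]
    _ ≤ ENNReal.ofReal ((ζ : ℝ) / 4) +
          (T + ENNReal.ofReal (θ (φ i)) + ENNReal.ofReal (θ (φ i))) := add_le_add h3 (hdbq _)
    _ ≤ ENNReal.ofReal ((ζ : ℝ) / 4) +
          (T + ENNReal.ofReal ((ζ : ℝ) / 4) + ENNReal.ofReal ((ζ : ℝ) / 4)) := by
          gcongr
    _ = T + (ENNReal.ofReal ((ζ : ℝ) / 4) + ENNReal.ofReal ((ζ : ℝ) / 4)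
          + ENNReal.ofReal ((ζ : ℝ) / 4)) := by ring
    _ ≤ T + (ζ : ℝ≥0∞) := add_le_add_right (hquarter ζ hζ) _
  haveI : Nonempty {ε : ℝ≥0∞ // 0 < ε} := ⟨⟨1, one_pos⟩⟩
  have claimB' : chainMetric bb q + ENNReal.ofReal δ ≤ T := by
    rw [chainMetric_eq_subtype bb q, ENNReal.iSup_add]
    exact iSup_le fun s => perE s.1 s.2
  -- Claim B : near-optimality of the split through bb
  have pairE : ∀ ε' : ℝ≥0∞, 0 < ε' → chainDist ε' a bb + chainDist ε' bb q ≤ T := by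
    intro ε' hε'
    refine ENNReal.le_of_forall_pos_le_add fun ζ hζ _ => ?_
    obtain ⟨i, h1, h2, h3, h4⟩ := haux ε' hε' ((ζ : ℝ) / 4) (by positivity)
    have k1 : chainDist ε' a bb ≤ chainDist (ε (φ i)) a (b (φ i)) + edist (b (φ i)) bb := by
      calc chainDist ε' a bb ≤ chainDist ε' a (b (φ i)) + chainDist ε' (b (φ i)) bb :=
            chainDist_triangle _ _ _ _
      _ ≤ _ := add_le_add (chainDist_mono h1 _ _) (chainDist_le_edist h2)
    have k2 : chainDist ε' bb q ≤ edist (b (φ i)) bb + chainDist (ε (φ i)) (b (φ i)) q := by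
      calc chainDist ε' bb q ≤ chainDist ε' bb (b (φ i)) + chainDist ε' (b (φ i)) q :=
            chainDist_triangle _ _ _ _
      _ ≤ edist bb (b (φ i)) + chainDist (ε (φ i)) (b (φ i)) q :=
            add_le_add (chainDist_le_edist (by rwa [edist_comm])) (chainDist_mono h1 _ _)
      _ = _ := by rw [edist_comm]
    calc chainDist ε' a bb + chainDist ε' bb q
        ≤ (chainDist (ε (φ i)) a (b (φ i)) + edist (b (φ i)) bb)
          + (edist (b (φ i)) bb + chainDist (ε (φ i)) (b (φ i)) q) := add_le_add k1 k2
    _ = (chainDist (ε (φ i)) a (b (φ i)) + chainDist (ε (φ i)) (b (φ i)) q)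
          + (edist (b (φ i)) bb + edist (b (φ i)) bb) := by ring
    _ ≤ (T + ENNReal.ofReal (θ (φ i)))
          + (ENNReal.ofReal ((ζ : ℝ) / 4) + ENNReal.ofReal ((ζ : ℝ) / 4)) :=
          add_le_add (hsplit _) (add_le_add h3 h3)
    _ ≤ (T + ENNReal.ofReal ((ζ : ℝ) / 4))
          + (ENNReal.ofReal ((ζ : ℝ) / 4) + ENNReal.ofReal ((ζ : ℝ) / 4)) := by gcongr
    _ = T + (ENNReal.ofReal ((ζ : ℝ) / 4) + ENNReal.ofReal ((ζ : ℝ) / 4)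
          + ENNReal.ofReal ((ζ : ℝ) / 4)) := by ring
    _ ≤ T + (ζ : ℝ≥0∞) := add_le_add_right (hquarter ζ hζ) _
  have claimB : chainMetric a bb + chainMetric bb q ≤ T := by
    rw [chainMetric_eq_subtype a bb, chainMetric_eq_subtype bb q]
    refine ENNReal.iSup_add_iSup_le ?_
    rintro ⟨ε₁, h1⟩ ⟨ε₂, h2⟩
    have h := pairE (min ε₁ ε₂) (lt_min h1 h2)
    exact le_trans (add_le_add (chainDist_mono (min_le_left _ _) _ _)
      (chainDist_mono (min_le_right _ _) _ _)) h
  -- conclusion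
  have hEq : T = chainMetric a bb + chainMetric bb q :=
    le_antisymm (chainMetric_triangle a bb q) claimB
  have hbbfin : chainMetric bb q ≠ ⊤ :=
    ne_top_of_le_ne_top hfin ((le_add_right le_rfl).trans claimB')
  have hge : ENNReal.ofReal δ ≤ chainMetric a bb := by
    have h2 : chainMetric bb q + ENNReal.ofReal δ ≤ chainMetric bb q + chainMetric a bb := by
      rw [hEq] at claimB'
      calc chainMetric bb q + ENNReal.ofReal δ ≤ chainMetric a bb + chainMetric bb q := claimB'
      _ = chainMetric bb q + chainMetric a bb := add_comm _ _
    exact (ENNReal.add_le_add_iff_left hbbfin).1 h2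
  have hAeq : chainMetric a bb = ENNReal.ofReal δ := le_antisymm claimA hge
  exact ⟨bb, hAeq, by rw [hEq, hAeq]⟩

end Step3

lemma nsmul_ofReal {δ : ℝ} (hδ : 0 ≤ δ) (n : ℕ) :
    n • ENNReal.ofReal δ = ENNReal.ofReal (n * δ) := by
  induction n with
  | zero => simp
  | succ n ih =>
    rw [succ_nsmul, ih, ← ENNReal.ofReal_add (mul_nonneg n.cast_nonneg hδ) hδ]
    congr 1
    push_cast
    ring


/-- weak additivity. If `(X,d)` is locally compact, the `d_0`-ball
`B_{d_0}(p;r)` is `d`-precompact and `r ≤ d_0(p,q) < ∞`, then for all sufficiently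
small `δ > 0` there are points `P 0 = p, P 1, …, P N` with `N = ⌊r/δ⌋` such that
`d_0(p,q) = d_0(P 0,P 1) + ⋯ + d_0(P (N-1), P N) + d_0(P N, q)` and
`d_0(P (k-1), P k) = δ` for all `k`. -/
theorem chainMetric_weak_additivity {X : Type*} [MetricSpace X] [LocallyCompactSpace X]
    (p q : X) (r : ℝ)
    (hpre : IsCompact (closure {y : X | chainMetric p y < ENNReal.ofReal r}))
    (hr : ENNReal.ofReal r ≤ chainMetric p q) (hfin : chainMetric p q ≠ ⊤) :
    ∃ δ₀ : ℝ, 0 < δ₀ ∧ ∀ δ : ℝ, 0 < δ → δ ≤ δ₀ →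
      ∃ P : ℕ → X, P 0 = p ∧
        chainMetric p q =
          (∑ k ∈ Finset.range ⌊r / δ⌋₊, chainMetric (P k) (P (k + 1))) +
            chainMetric (P ⌊r / δ⌋₊) q ∧
        ∀ k < ⌊r / δ⌋₊, chainMetric (P k) (P (k + 1)) = ENNReal.ofReal δ := by
  by_cases hr0 : r ≤ 0
  · refine ⟨1, one_pos, fun δ hδ _ => ⟨fun _ => p, rfl, ?_, ?_⟩⟩
    · have hN : ⌊r / δ⌋₊ = 0 :=
        Nat.floor_eq_zero.2 (lt_of_le_of_lt (div_nonpos_iff.2 (Or.inr ⟨hr0, hδ.le⟩)) zero_lt_one)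
      rw [hN]
      simp
    · intro k hk
      have hN : ⌊r / δ⌋₊ = 0 :=
        Nat.floor_eq_zero.2 (lt_of_le_of_lt (div_nonpos_iff.2 (Or.inr ⟨hr0, hδ.le⟩)) zero_lt_one)
      omega
  push_neg at hr0
  set K := closure {y : X | chainMetric p y < ENNReal.ofReal r} with hK
  obtain ⟨K', hK', hsub⟩ := exists_compact_superset hpre
  obtain ⟨η, hη, hthick⟩ := hpre.exists_thickening_subset_open isOpen_interior hsub
  refine ⟨η / 3, by positivity, fun δ hδ hδη => ?_⟩
  set N := ⌊r / δ⌋₊ with hN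
  have hNδ : (N : ℝ) * δ ≤ r := by
    have h1 : (N : ℝ) ≤ r / δ := Nat.floor_le (le_of_lt (div_pos hr0 hδ))
    rwa [← le_div_iff₀ hδ]
  have key : ∀ n : ℕ, n ≤ N → ∃ P : ℕ → X, P 0 = p ∧
      (∀ k < n, chainMetric (P k) (P (k + 1)) = ENNReal.ofReal δ) ∧
      chainMetric p (P n) = ENNReal.ofReal (n * δ) ∧
      chainMetric p q = ENNReal.ofReal (n * δ) + chainMetric (P n) q := by
    intro n
    induction n with
    | zero =>
      intro _
      exact ⟨fun _ => p, rfl, by omega, by simp [chainMetric_self], by simp⟩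
    | succ n ih =>
      intro hn1
      obtain ⟨P, hP0, hPstep, hPn, hPq⟩ := ih (by omega)
      have hnδr : (n : ℝ) * δ + δ ≤ r := by
        have h2 : ((n : ℝ) + 1) ≤ (N : ℝ) := by exact_mod_cast hn1
        nlinarith
      have haK : P n ∈ K := by
        apply subset_closure
        show chainMetric p (P n) < ENNReal.ofReal r
        rw [hPn]
        apply ENNReal.ofReal_lt_ofReal_iff_of_nonneg (mul_nonneg n.cast_nonneg hδ.le) |>.2
        linarith
      have hafin : chainMetric (P n) q ≠ ⊤ := fun h => hfin (by rw [hPq, h, add_top])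
      have haδ : ENNReal.ofReal δ ≤ chainMetric (P n) q := by
        have h1 : ENNReal.ofReal (n * δ) + ENNReal.ofReal δ
            ≤ ENNReal.ofReal (n * δ) + chainMetric (P n) q := by
          rw [← ENNReal.ofReal_add (mul_nonneg n.cast_nonneg hδ.le) hδ.le, ← hPq]
          exact le_trans (ENNReal.ofReal_le_ofReal (by linarith)) hr
        exact (ENNReal.add_le_add_iff_left ENNReal.ofReal_ne_top).1 h1
      have hball : ∀ y : X, dist (P n) y ≤ δ + η / 3 → y ∈ K' := by
        intro y hy
        have hmem : y ∈ Metric.thickening η K := by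
          rw [Metric.mem_thickening_iff]
          exact ⟨P n, haK, by rw [dist_comm]; linarith⟩
        exact interior_subset (hthick hmem)
      obtain ⟨b, hb1, hb2⟩ := step_lemma hK' (P n) q hδ (by positivity) hball hafin haδ
      have hbfin : chainMetric b q ≠ ⊤ := fun h => hafin (by rw [hb2, h, add_top])
      refine ⟨fun i => if i ≤ n then P i else b, by simp [hP0], ?_, ?_, ?_⟩
      · intro k hk
        rcases Nat.lt_or_ge k n with hkn | hkn
        · simpa [Nat.le_of_lt hkn, Nat.succ_le_of_lt hkn] using hPstep k hkn
        · have hk' : k = n := by omega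
          subst hk'
          simpa using hb1
      · show chainMetric p (if n + 1 ≤ n then P (n + 1) else b) = _
        rw [if_neg (by omega)]
        have hle : chainMetric p b ≤ ENNReal.ofReal (↑(n + 1) * δ) := by
          calc chainMetric p b ≤ chainMetric p (P n) + chainMetric (P n) b :=
                chainMetric_triangle _ _ _
          _ = ENNReal.ofReal (n * δ) + ENNReal.ofReal δ := by rw [hPn, hb1]
          _ = ENNReal.ofReal (↑(n + 1) * δ) := by
                rw [← ENNReal.ofReal_add (mul_nonneg n.cast_nonneg hδ.le) hδ.le]
                congr 1
                push_cast
                ring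
        have hge : ENNReal.ofReal (↑(n + 1) * δ) ≤ chainMetric p b := by
          have h1 : chainMetric p q = ENNReal.ofReal (↑(n + 1) * δ) + chainMetric b q := by
            rw [hPq, hb2, ← add_assoc,
              ← ENNReal.ofReal_add (mul_nonneg n.cast_nonneg hδ.le) hδ.le]
            congr 2
            push_cast
            ring
          have h2 : ENNReal.ofReal (↑(n + 1) * δ) + chainMetric b q
              ≤ chainMetric p b + chainMetric b q := by
            rw [← h1]
            exact chainMetric_triangle _ _ _
          exact (ENNReal.add_le_add_iff_right hbfin).1 h2
        exact le_antisymm hle hge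
      · show chainMetric p q = ENNReal.ofReal (↑(n + 1) * δ)
            + chainMetric (if n + 1 ≤ n then P (n + 1) else b) q
        rw [if_neg (by omega), hPq, hb2, ← add_assoc,
          ← ENNReal.ofReal_add (mul_nonneg n.cast_nonneg hδ.le) hδ.le]
        congr 2
        push_cast
        ring
  obtain ⟨P, hP0, hPstep, hPN, hPq⟩ := key N le_rfl
  refine ⟨P, hP0, ?_, hPstep⟩
  rw [hPq]
  congr 1
  refine Eq.symm ?_
  calc ∑ k ∈ Finset.range N, chainMetric (P k) (P (k + 1))
      = ∑ _k ∈ Finset.range N, ENNReal.ofReal δ :=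
        Finset.sum_congr rfl fun k hk => hPstep k (Finset.mem_range.1 hk)
  _ = N • ENNReal.ofReal δ := by rw [Finset.sum_const, Finset.card_range]
  _ = ENNReal.ofReal (N * δ) := nsmul_ofReal hδ.le N
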